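/- arXiv:1306.3170 — 2 statements merged into one kernel-verified Lean document; each statement's English description precedes it below -/
import Mathlib

section
/- There is an isometric embedding of ℤ into the Farey graph: there exists a map f : ℤ → Option ℚ such that for all integers m and n, the graph distance in F between f m and f n equals |m − n|. (In particular F contains a bi-infinite geodesic and has infinite diameter.) -/
/-- The Farey graph on vertex set `Option ℚ`, where `none` represents `∞ = 1/0`.
Two distinct rationals `a`, `b` are adjacent iff `|a.num * b.den - b.num * a.den| = 1`;
`∞` is adjacent to a rational `a` iff `a.den = 1`. -/
def Farey : SimpleGraph (Option ℚ) where
  Adj u v :=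
    match u, v with
    | none, none => False
    | none, some a => a.den = 1
    | some a, none => a.den = 1
    | some a, some b => a ≠ b ∧ |a.num * (b.den : ℤ) - b.num * (a.den : ℤ)| = 1
  symm := by
    refine ⟨?_⟩
    intro u v h
    match u, v with
    | none, some a => exact h
    | some a, none => exact h
    | some a, some b =>
      refine ⟨h.1.symm, ?_⟩
      rw [abs_sub_comm]
      exact h.2
  loopless := by
    refine ⟨?_⟩
    intro u h
    match u with
    | none => exact h
    | some a => exact h.1 rfl

namespace FareyAux

lemma num_mul_eq (x : ℚ) (p q : ℤ) (hq : q ≠ 0) (h : x = (p:ℚ)/q) :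
    x.num * q = p * x.den := by
  have hd : (x.den : ℚ) ≠ 0 := by exact_mod_cast x.den_nz
  have hqQ : (q:ℚ) ≠ 0 := Int.cast_ne_zero.mpr hq
  have hx : (x.num : ℚ) / x.den = (p:ℚ)/q := by rw [Rat.num_div_den x]; exact h
  have := (div_eq_div_iff hd hqQ).mp hx
  exact_mod_cast this

lemma den_dvd_of_eq_div (x : ℚ) (p q : ℤ) (hq : q ≠ 0) (h : x = (p:ℚ)/q) :
    (x.den : ℤ) ∣ q := by
  have key := num_mul_eq x p q hq h
  have h1 : (x.den : ℤ) ∣ q * x.num := by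
    refine ⟨p, ?_⟩; linarith [key]
  refine Int.dvd_of_dvd_mul_left_of_gcd_one h1 ?_
  have := x.reduced
  simpa [Int.gcd, Nat.coprime_comm] using this.symm

/-- representation of a vertex by a pair of integers -/
def Rep (v : Option ℚ) (p q : ℤ) : Prop :=
  match v with
  | none => q = 0 ∧ (p = 1 ∨ p = -1)
  | some x => q ≠ 0 ∧ (x : ℚ) = (p : ℚ) / (q : ℚ)

lemma int_den_one (r : ℤ) (s : ℤ) (hs : s = 1 ∨ s = -1) (b : ℚ) (hb : b = (r:ℚ)/s) :
    b.den = 1 := by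
  rcases hs with h | h <;> subst h
  · simp [hb]
  · have : b = ((-r : ℤ) : ℚ) := by push_cast [hb]; ring
    simp [this]

lemma rep_self (a : ℚ) : Rep (some a) a.num (a.den : ℤ) := by
  refine ⟨by exact_mod_cast a.den_nz, ?_⟩
  push_cast
  exact (Rat.num_div_den a).symm

lemma adj_iff (u v : Option ℚ) :
    Farey.Adj u v ↔ u ≠ v ∧ ∃ p q r s : ℤ, Rep u p q ∧ Rep v r s ∧ |p * s - r * q| = 1 := by
  constructor
  · intro h
    match u, v with
    | none, none => exact absurd h (by simp [Farey])
    | none, some b =>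
      have hb : b.den = 1 := h
      refine ⟨by simp, 1, 0, b.num, 1, ⟨rfl, Or.inl rfl⟩, ⟨one_ne_zero, ?_⟩, by simp⟩
      rw [← Rat.num_div_den b, hb]; norm_num
    | some a, none =>
      have ha : a.den = 1 := h
      refine ⟨by simp, a.num, 1, 1, 0, ⟨one_ne_zero, ?_⟩, ⟨rfl, Or.inl rfl⟩, by simp⟩
      rw [← Rat.num_div_den a, ha]; norm_num
    | some a, some b =>
      obtain ⟨hne, hdet⟩ := h
      exact ⟨by simpa using hne, a.num, a.den, b.num, b.den, rep_self a, rep_self b, hdet⟩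
  · rintro ⟨hne, p, q, r, s, hu, hv, hdet⟩
    match u, v with
    | none, none => exact absurd rfl hne
    | none, some b =>
      obtain ⟨hq, hp⟩ := hu
      obtain ⟨hs, hb⟩ := hv
      show b.den = 1
      subst hq
      have hps : |p| * |s| = 1 := by rw [← abs_mul]; simpa using hdet
      have habs : |p| = 1 := by rcases hp with h | h <;> simp [h]
      rw [habs, one_mul] at hps
      exact int_den_one r s ((abs_eq (by norm_num)).mp hps) b hb
    | some a, none =>
      obtain ⟨hq, ha⟩ := hu
      obtain ⟨hs, hr⟩ := hv
      show a.den = 1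
      subst hs
      have hps : |r| * |q| = 1 := by
        rw [← abs_mul]
        have : |r * q| = 1 := by simpa using hdet
        exact this
      have habs : |r| = 1 := by rcases hr with h | h <;> simp [h]
      rw [habs, one_mul] at hps
      exact int_den_one p q ((abs_eq (by norm_num)).mp hps) a ha
    | some a, some b =>
      obtain ⟨hq, ha⟩ := hu
      obtain ⟨hs, hb⟩ := hv
      have hne' : a ≠ b := fun h => hne (by rw [h])
      refine ⟨hne', ?_⟩
      have key1 := num_mul_eq a p q hq ha
      have key2 := num_mul_eq b r s hs hb
      set D := a.num * (b.den:ℤ) - b.num * (a.den:ℤ) with hD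
      have E : (p * s - r * q) * ((a.den:ℤ) * (b.den:ℤ)) = q * s * D := by
        rw [hD]; linear_combination (-(s * (b.den:ℤ))) * key1 + (q * (a.den:ℤ)) * key2
      have habs : ((a.den:ℤ) * (b.den:ℤ)) = |q| * |s| * |D| := by
        have h0 := congrArg abs E
        rw [abs_mul, hdet, one_mul, abs_mul, abs_mul] at h0
        have h1 : |(a.den:ℤ)| = a.den := abs_of_nonneg (by positivity)
        have h2 : |(b.den:ℤ)| = b.den := abs_of_nonneg (by positivity)
        rw [abs_mul, h1, h2] at h0
        exact h0
      have hdvd1 : (a.den:ℤ) ≤ |q| :=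
        Int.le_of_dvd (abs_pos.mpr hq) ((dvd_abs _ _).mpr (den_dvd_of_eq_div a p q hq ha))
      have hdvd2 : (b.den:ℤ) ≤ |s| :=
        Int.le_of_dvd (abs_pos.mpr hs) ((dvd_abs _ _).mpr (den_dvd_of_eq_div b r s hs hb))
      have hda : (1:ℤ) ≤ (a.den:ℤ) := by exact_mod_cast a.den_pos
      have hdb : (1:ℤ) ≤ (b.den:ℤ) := by exact_mod_cast b.den_pos
      have hDne : D ≠ 0 := by
        intro h0
        rw [h0] at habs
        simp at habs
      have h1le : (1:ℤ) ≤ |D| := Int.one_le_abs (by simpa using hDne)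
      have hqs : (a.den:ℤ) * (b.den:ℤ) ≤ |q| * |s| :=
        mul_le_mul hdvd1 hdvd2 (by positivity) (abs_nonneg q)
      have hle : |D| ≤ 1 := by
        by_contra hgt
        have h2 : 2 ≤ |D| := by omega
        have hkey : (a.den:ℤ) * (b.den:ℤ) * 2 ≤ (|q| * |s|) * |D| := by
          nlinarith [mul_nonneg (abs_nonneg q) (abs_nonneg s)]
        have hP : (1:ℤ) ≤ (a.den:ℤ) * (b.den:ℤ) := by nlinarith
        nlinarith
      omega

/-- Möbius map x ↦ (2x+1)/(x+1), with g(∞)=2, g(-1)=∞. Matrix [[2,1],[1,1]]. -/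
def gm : Option ℚ → Option ℚ
  | none => some 2
  | some x => if x = -1 then none else some ((2*x+1)/(x+1))

/-- Inverse: x ↦ (x-1)/(2-x), with h(∞)=-1, h(2)=∞. -/
def hm : Option ℚ → Option ℚ
  | none => some (-1)
  | some x => if x = 2 then none else some ((x-1)/(2-x))

lemma hm_gm (v : Option ℚ) : hm (gm v) = v := by
  match v with
  | none => simp [gm, hm]
  | some x =>
    by_cases hx : x = -1
    · simp [gm, hm, hx]
    · have h1 : x + 1 ≠ 0 := fun h => hx (by linarith)
      simp only [gm, hm, if_neg hx]
      have hne2 : (2*x+1)/(x+1) ≠ 2 := by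
        intro h
        rw [div_eq_iff h1] at h
        linarith
      rw [if_neg hne2]
      congr 1
      field_simp
      ring
  
lemma gm_hm (v : Option ℚ) : gm (hm v) = v := by
  match v with
  | none => simp [gm, hm]
  | some x =>
    by_cases hx : x = 2
    · simp [gm, hm, hx]
    · have h1 : 2 - x ≠ 0 := fun h => hx (by linarith)
      simp only [hm, gm, if_neg hx]
      have hne : (x-1)/(2-x) ≠ -1 := by
        intro h
        rw [div_eq_iff h1] at h
        linarith
      rw [if_neg hne]
      congr 1
      field_simp
      ring

/-- The Möbius map as a permutation of `Option ℚ`. -/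
def e : Equiv.Perm (Option ℚ) := ⟨gm, hm, hm_gm, gm_hm⟩

lemma rep_gm {u : Option ℚ} {p q : ℤ} (h : Rep u p q) (hpm : p + q = 0 → p = 1 ∨ p = -1) :
    Rep (gm u) (2*p+q) (p+q) := by
  match u with
  | none =>
    obtain ⟨hq, hp⟩ := h
    subst hq
    have hp0 : p ≠ 0 := by rcases hp with h|h <;> simp [h]
    refine ⟨by simpa using hp0, ?_⟩
    show (2:ℚ) = ((2*p+0 : ℤ):ℚ)/((p+0 : ℤ):ℚ)
    have : ((p:ℚ)) ≠ 0 := Int.cast_ne_zero.mpr hp0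
    push_cast
    rw [add_zero, add_zero, mul_div_assoc, div_self this, mul_one]
  | some x =>
    obtain ⟨hq, hx⟩ := h
    have hqQ : (q:ℚ) ≠ 0 := Int.cast_ne_zero.mpr hq
    by_cases hx1 : x = -1
    · have hpq : p + q = 0 := by
        have : (p:ℚ) = -q := by
          have := hx; rw [hx1] at this
          field_simp at this
          linarith
        have : p = -q := by exact_mod_cast this
        omega
      have hp1 := hpm hpq
      show Rep (gm (some x)) _ _
      rw [gm, if_pos hx1]
      exact ⟨by omega, by omega⟩
    · have hpq : p + q ≠ 0 := by
        intro h0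
        apply hx1
        have hp : (p:ℚ) = -q := by exact_mod_cast (by omega : p = -q)
        rw [hx, hp]
        field_simp
      show Rep (gm (some x)) _ _
      rw [gm, if_neg hx1]
      refine ⟨by exact_mod_cast hpq, ?_⟩
      have hx1' : x + 1 ≠ 0 := fun h => hx1 (by linarith)
      have hpqQ : ((p:ℚ) + q) ≠ 0 := by exact_mod_cast Int.cast_ne_zero.mpr hpq
      rw [hx]
      push_cast
      rw [div_eq_div_iff (by rw [← hx]; exact hx1') hpqQ]
      field_simp

lemma rep_hm {u : Option ℚ} {p q : ℤ} (h : Rep u p q) (hpm : -p + 2*q = 0 → q = 1 ∨ q = -1) :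
    Rep (hm u) (p - q) (-p + 2*q) := by
  match u with
  | none =>
    obtain ⟨hq, hp⟩ := h
    subst hq
    have hp0 : p ≠ 0 := by rcases hp with h|h <;> simp [h]
    refine ⟨by simpa using hp0, ?_⟩
    show (-1:ℚ) = ((p-0 : ℤ):ℚ)/((-p+2*0 : ℤ):ℚ)
    have : ((p:ℚ)) ≠ 0 := Int.cast_ne_zero.mpr hp0
    push_cast
    rw [sub_zero, add_zero, div_neg, div_self this]
  | some x =>
    obtain ⟨hq, hx⟩ := h
    have hqQ : (q:ℚ) ≠ 0 := Int.cast_ne_zero.mpr hq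
    by_cases hx1 : x = 2
    · have hpq : -p + 2*q = 0 := by
        have : (p:ℚ) = 2*q := by
          have := hx; rw [hx1] at this
          field_simp at this
          linarith
        have : p = 2*q := by exact_mod_cast this
        omega
      have hp1 := hpm hpq
      show Rep (hm (some x)) _ _
      rw [hm, if_pos hx1]
      exact ⟨by omega, by omega⟩
    · have hpq : -p + 2*q ≠ 0 := by
        intro h0
        apply hx1
        have hp : (p:ℚ) = 2*q := by exact_mod_cast (by omega : p = 2*q)
        rw [hx, hp]
        exact mul_div_cancel_right₀ 2 hqQ
      show Rep (hm (some x)) _ _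
      rw [hm, if_neg hx1]
      refine ⟨by exact_mod_cast hpq, ?_⟩
      have hx1' : (2:ℚ) - x ≠ 0 := fun h => hx1 (by linarith)
      have hpqQ : ((-p:ℚ) + 2*q) ≠ 0 := by exact_mod_cast Int.cast_ne_zero.mpr hpq
      rw [hx]
      push_cast
      rw [div_eq_div_iff (by rw [← hx]; exact hx1') hpqQ]
      field_simp
      ring

lemma abs_eq_one_of_unimodular {p s r q : ℤ} (hdet : |p * s - r * q| = 1) (h0 : q = -p) :
    p = 1 ∨ p = -1 := by
  have e1 : p * s - r * q = p * (s + r) := by rw [h0]; ring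
  rw [e1, abs_mul] at hdet
  rcases Int.mul_eq_one_iff_eq_one_or_neg_one.mp hdet with ⟨h, _⟩ | ⟨h, _⟩
  · exact (abs_eq (by norm_num)).mp h
  · exfalso; have := abs_nonneg p; omega

lemma adj_gm {u v : Option ℚ} (h : Farey.Adj u v) : Farey.Adj (gm u) (gm v) := by
  rw [adj_iff] at h ⊢
  obtain ⟨hne, p, q, r, s, hu, hv, hdet⟩ := h
  refine ⟨fun hh => hne (by have := congrArg hm hh; rwa [hm_gm, hm_gm] at this),
    2*p+q, p+q, 2*r+s, r+s, rep_gm hu ?_, rep_gm hv ?_, ?_⟩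
  · intro h0
    exact abs_eq_one_of_unimodular hdet (by omega)
  · intro h0
    have hdet' : |r * q - p * s| = 1 := by rwa [abs_sub_comm] at hdet
    exact abs_eq_one_of_unimodular hdet' (by omega)
  · have e2 : (2*p+q) * (r+s) - (2*r+s) * (p+q) = p * s - r * q := by ring
    rw [e2]; exact hdet

lemma abs_q_eq_one_of_unimodular {p s r q : ℤ} (hdet : |p * s - r * q| = 1) (h0 : p = 2*q) :
    q = 1 ∨ q = -1 := by
  have e1 : p * s - r * q = q * (2*s - r) := by rw [h0]; ring
  rw [e1, abs_mul] at hdet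
  rcases Int.mul_eq_one_iff_eq_one_or_neg_one.mp hdet with ⟨h, _⟩ | ⟨h, _⟩
  · exact (abs_eq (by norm_num)).mp h
  · exfalso; have := abs_nonneg q; omega

lemma adj_hm {u v : Option ℚ} (h : Farey.Adj u v) : Farey.Adj (hm u) (hm v) := by
  rw [adj_iff] at h ⊢
  obtain ⟨hne, p, q, r, s, hu, hv, hdet⟩ := h
  refine ⟨fun hh => hne (by have := congrArg gm hh; rwa [gm_hm, gm_hm] at this),
    p - q, -p + 2*q, r - s, -r + 2*s, rep_hm hu ?_, rep_hm hv ?_, ?_⟩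
  · intro h0
    exact abs_q_eq_one_of_unimodular hdet (by omega)
  · intro h0
    have hdet' : |r * q - p * s| = 1 := by rwa [abs_sub_comm] at hdet
    exact abs_q_eq_one_of_unimodular hdet' (by omega)
  · have e2 : (p-q) * (-r+2*s) - (r-s) * (-p+2*q) = p * s - r * q := by ring
    rw [e2]; exact hdet

lemma e_apply (u : Option ℚ) : e u = gm u := rfl
lemma e_symm_apply (u : Option ℚ) : e.symm u = hm u := rfl

lemma adj_zpow (n : ℤ) : ∀ {u v : Option ℚ}, Farey.Adj u v → Farey.Adj ((e^n) u) ((e^n) v) := by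
  induction n using Int.induction_on with
  | zero => intro u v h; simpa using h
  | succ k ih =>
    intro u v h
    rw [zpow_add_one]
    simp only [Equiv.Perm.mul_apply]
    exact ih (by rw [e_apply, e_apply]; exact adj_gm h)
  | pred k ih =>
    intro u v h
    rw [zpow_sub_one]
    simp only [Equiv.Perm.mul_apply, Equiv.Perm.inv_def]
    exact ih (by rw [e_symm_apply, e_symm_apply]; exact adj_hm h)

/-- The candidate geodesic. -/
noncomputable def geo (n : ℤ) : Option ℚ := (e^n) none

lemma adj_geo (n : ℤ) : Farey.Adj (geo n) (geo (n+1)) := by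
  have h2 : Farey.Adj none (some 2) := by
    show (2:ℚ).den = 1
    norm_num
  have := adj_zpow n h2
  have hg : geo (n+1) = (e^n) (some 2) := by
    show (e^(n+1)) none = _
    rw [zpow_add_one]
    simp only [Equiv.Perm.mul_apply]
    rfl
  rw [hg]
  exact this

/-! ### The fundamental domain and levels -/

/-- Fundamental domain: `∞`, `[0,1)`, `(2,∞)`. -/
def InF : Option ℚ → Prop
  | none => True
  | some x => (0 ≤ x ∧ x < 1) ∨ 2 < x

lemma gm_some (x : ℚ) (hx : x ≠ -1) : gm (some x) = some ((2*x+1)/(x+1)) := by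
  rw [gm, if_neg hx]

lemma hm_some (x : ℚ) (hx : x ≠ 2) : hm (some x) = some ((x-1)/(2-x)) := by
  rw [hm, if_neg hx]

lemma L1 {y : ℚ} (hy : y ≤ -1) : InF (gm (some y)) := by
  rcases eq_or_lt_of_le hy with h | h
  · rw [gm, if_pos h]; trivial
  · rw [gm_some y h.ne]
    refine Or.inr ?_
    rw [lt_div_iff_of_neg (by linarith : y + 1 < 0)]
    linarith

lemma L2 {y : ℚ} (h1 : -1/2 ≤ y) (h2 : y < 0) : InF (gm (some y)) := by
  rw [gm_some y (by intro h; rw [h] at h1; norm_num at h1)]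
  refine Or.inl ⟨?_, ?_⟩
  · exact div_nonneg (by linarith) (by linarith)
  · rw [div_lt_one (by linarith : (0:ℚ) < y + 1)]
    linarith

lemma L4 {y : ℚ} (h1 : 1 ≤ y) (h2 : y < 3/2) : InF (hm (some y)) := by
  rw [hm_some y (by intro h; rw [h] at h2; norm_num at h2)]
  refine Or.inl ⟨?_, ?_⟩
  · exact div_nonneg (by linarith) (by linarith)
  · rw [div_lt_one (by linarith : (0:ℚ) < 2 - y)]
    linarith

lemma L5 {y : ℚ} (h1 : 5/3 < y) (h2 : y ≤ 2) : InF (hm (some y)) := by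
  rcases eq_or_lt_of_le h2 with h | h
  · rw [hm, if_pos h]; trivial
  · rw [hm_some y h.ne]
    refine Or.inr ?_
    rw [lt_div_iff₀ (by linarith : (0:ℚ) < 2 - y)]
    linarith

/-- `v` is at level `n`. -/
def Lv (n : ℤ) (v : Option ℚ) : Prop := InF ((e^(-n)) v)

lemma lv_zero_iff (v : Option ℚ) : Lv 0 v ↔ InF v := by
  unfold Lv; rw [neg_zero, zpow_zero]; rfl


lemma self_eq_div (x : ℚ) : x = ((x.num:ℤ):ℚ)/(((x.den:ℤ)):ℚ) := by
  push_cast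
  exact (Rat.num_div_den x).symm

lemma den_le_of_eq_div (y : ℚ) (a b : ℤ) (hb : 0 < b) (h : y = (a:ℚ)/b) : (y.den:ℤ) ≤ b :=
  Int.le_of_dvd hb (den_dvd_of_eq_div y a b hb.ne' h)

lemma num_eq_mul_den (x : ℚ) : (x.num : ℚ) = x * (x.den : ℚ) := by
  have h := Rat.num_div_den x
  have hden : ((x.den:ℕ):ℚ) ≠ 0 := by exact_mod_cast x.den_nz
  rw [div_eq_iff hden] at h
  exact h

lemma num_lt_of_lt {x : ℚ} {c : ℤ} (h : x < c) : x.num < c * x.den := by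
  have hq : (0:ℚ) < (x.den:ℚ) := by exact_mod_cast x.den_pos
  have hx : (x.num:ℚ) < c * x.den := by
    rw [num_eq_mul_den x]
    exact mul_lt_mul_of_pos_right h hq
  exact_mod_cast hx

lemma lt_num_of_lt {x : ℚ} {c : ℤ} (h : (c:ℚ) < x) : c * x.den < x.num := by
  have hq : (0:ℚ) < (x.den:ℚ) := by exact_mod_cast x.den_pos
  have hx : (c:ℚ) * x.den < x.num := by
    rw [num_eq_mul_den x]
    exact mul_lt_mul_of_pos_right h hq
  exact_mod_cast hx

lemma den_gm_lt {x : ℚ} (h1 : -1 < x) (h2 : x < 0) : ((2*x+1)/(x+1)).den < x.den := by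
  set p := x.num with hp
  set q := (x.den : ℤ) with hqdef
  have hq : (0:ℤ) < q := by rw [hqdef]; exact_mod_cast x.den_pos
  have hx : x = (p:ℚ)/(q:ℚ) := self_eq_div x
  have hpneg : p < 0 := by
    have h0 := num_lt_of_lt (c := 0) (x := x) (by exact_mod_cast h2)
    omega
  have hpq : -q < p := by
    have h0 := lt_num_of_lt (c := -1) (x := x) (by exact_mod_cast h1)
    omega
  have hxne : x + 1 ≠ 0 := by intro h; rw [show x = -1 by linarith] at h1; norm_num at h1
  have hne2 : ((p+q:ℤ):ℚ) ≠ 0 := by exact_mod_cast (by omega : p + q ≠ 0)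
  have hval : (2*x+1)/(x+1) = ((2*p+q:ℤ):ℚ)/(((p+q:ℤ)):ℚ) := by
    rw [div_eq_div_iff hxne hne2, hx]
    have hqQ : ((q:ℤ):ℚ) ≠ 0 := by exact_mod_cast hq.ne'
    push_cast
    field_simp
  have hle := den_le_of_eq_div _ (2*p+q) (p+q) (by omega) hval
  omega

lemma den_hm_lt {x : ℚ} (h1 : 1 < x) (h2 : x < 2) : ((x-1)/(2-x)).den < x.den := by
  set p := x.num with hp
  set q := (x.den : ℤ) with hqdef
  have hq : (0:ℤ) < q := by rw [hqdef]; exact_mod_cast x.den_pos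
  have hx : x = (p:ℚ)/(q:ℚ) := self_eq_div x
  have hplt : p < 2*q := by
    have h0 := num_lt_of_lt (c := 2) (x := x) (by exact_mod_cast h2)
    omega
  have hpgt : q < p := by
    have h0 := lt_num_of_lt (c := 1) (x := x) (by exact_mod_cast h1)
    omega
  have hxne : 2 - x ≠ 0 := by intro h; rw [show x = 2 by linarith] at h2; norm_num at h2
  have hne2 : ((2*q-p:ℤ):ℚ) ≠ 0 := by exact_mod_cast (by omega : 2*q - p ≠ 0)
  have hval : (x-1)/(2-x) = ((p-q:ℤ):ℚ)/(((2*q-p:ℤ)):ℚ) := by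
    rw [div_eq_div_iff hxne hne2, hx]
    have hqQ : ((q:ℤ):ℚ) ≠ 0 := by exact_mod_cast hq.ne'
    push_cast
    field_simp
  have hle := den_le_of_eq_div _ (p-q) (2*q-p) (by omega) hval
  omega

lemma e_pow_mul_apply (a b : ℤ) (v : Option ℚ) : (e^a) ((e^b) v) = (e^(a+b)) v := by
  rw [zpow_add]
  rfl

lemma zpow_apply_gm (n : ℤ) (v : Option ℚ) : (e^n) (gm v) = (e^(n+1)) v := by
  rw [zpow_add_one]
  rfl

lemma zpow_apply_hm (n : ℤ) (v : Option ℚ) : (e^n) (hm v) = (e^(n-1)) v := by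
  rw [zpow_sub_one]
  rfl

lemma hm_zpow (n : ℤ) (v : Option ℚ) : hm ((e^n) v) = (e^(n-1)) v := by
  rw [show n - 1 = -1 + n by ring, zpow_add, zpow_neg_one]
  rfl

lemma lv_gm_iff (n : ℤ) (v : Option ℚ) : Lv n (gm v) ↔ Lv (n-1) v := by
  unfold Lv
  rw [zpow_apply_gm, show -n + 1 = -(n-1) by ring]

lemma lv_hm_iff (n : ℤ) (v : Option ℚ) : Lv n (hm v) ↔ Lv (n+1) v := by
  unfold Lv
  rw [zpow_apply_hm, show -n - 1 = -(n+1) by ring]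

lemma lv_neg_one_iff (v : Option ℚ) : Lv (-1) v ↔ InF (gm v) := by
  unfold Lv
  rw [neg_neg, zpow_one]
  rfl

lemma lv_one_iff (v : Option ℚ) : Lv 1 v ↔ InF (hm v) := by
  unfold Lv
  rw [zpow_neg_one]
  rfl

lemma exists_lv (v : Option ℚ) : ∃ n, Lv n v := by
  match v with
  | none => exact ⟨0, (lv_zero_iff none).mpr trivial⟩
  | some x =>
    suffices h : ∀ d : ℕ, ∀ x : ℚ, x.den ≤ d → ∃ n, Lv n (some x) from h x.den x le_rfl
    intro d
    induction d with
    | zero => intro x hx; have := x.den_pos; omega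
    | succ d ih =>
      intro x hx
      rcases le_or_gt x (-1) with hc | hc
      · exact ⟨-1, (lv_neg_one_iff _).mpr (L1 hc)⟩
      rcases lt_or_ge x 0 with hc0 | hc0
      · -- -1 < x < 0 : recurse via gm
        have hden := den_gm_lt hc hc0
        obtain ⟨n, hn⟩ := ih ((2*x+1)/(x+1)) (by omega)
        have hgm : gm (some x) = some ((2*x+1)/(x+1)) :=
          gm_some x (by intro h; rw [h] at hc; norm_num at hc)
        rw [← hgm] at hn
        exact ⟨n - 1, (lv_gm_iff n _).mp hn⟩
      rcases lt_or_ge x 1 with hc1 | hc1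
      · exact ⟨0, (lv_zero_iff _).mpr (Or.inl ⟨hc0, hc1⟩)⟩
      rcases eq_or_lt_of_le hc1 with he | hgt
      · -- x = 1
        refine ⟨1, (lv_one_iff _).mpr ?_⟩
        rw [hm_some x (by rw [← he]; norm_num)]
        rw [← he]
        norm_num [InF]
      rcases lt_or_ge x 2 with hc2 | hc2
      · -- 1 < x < 2 : recurse via hm
        have hden := den_hm_lt hgt hc2
        obtain ⟨n, hn⟩ := ih ((x-1)/(2-x)) (by omega)
        have hhm : hm (some x) = some ((x-1)/(2-x)) :=
          hm_some x (by intro h; rw [h] at hc2; norm_num at hc2)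
        rw [← hhm] at hn
        exact ⟨n + 1, (lv_hm_iff n _).mp hn⟩
      rcases eq_or_lt_of_le hc2 with he2 | hgt2
      · -- x = 2
        refine ⟨1, (lv_one_iff _).mpr ?_⟩
        rw [hm, if_pos he2.symm]
        trivial
      · exact ⟨0, (lv_zero_iff _).mpr (Or.inr hgt2)⟩

/-- Negative region, invariant under `hm`. -/
def Nneg (v : Option ℚ) : Prop := ∃ x, v = some x ∧ x < 0

lemma nneg_hm_of_inF {v : Option ℚ} (h : InF v) : Nneg (hm v) := by
  match v with
  | none => exact ⟨-1, rfl, by norm_num⟩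
  | some x =>
    rcases h with ⟨h0, h1⟩ | h2
    · refine ⟨(x-1)/(2-x), ?_, ?_⟩
      · rw [hm_some x (by intro h; rw [h] at h1; norm_num at h1)]
      · exact div_neg_of_neg_of_pos (by linarith) (by linarith)
    · refine ⟨(x-1)/(2-x), ?_, ?_⟩
      · rw [hm_some x (by intro h; rw [h] at h2; norm_num at h2)]
      · exact div_neg_of_pos_of_neg (by linarith) (by linarith)

lemma nneg_hm_of_nneg {v : Option ℚ} (h : Nneg v) : Nneg (hm v) := by
  obtain ⟨x, rfl, hx⟩ := h
  refine ⟨(x-1)/(2-x), ?_, ?_⟩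
  · rw [hm_some x (by intro h; rw [h] at hx; norm_num at hx)]
  · exact div_neg_of_neg_of_pos (by linarith) (by linarith)

lemma not_inF_of_nneg {v : Option ℚ} (h : Nneg v) : ¬ InF v := by
  obtain ⟨x, rfl, hx⟩ := h
  rintro (⟨h0, _⟩ | h2) <;> linarith

lemma nneg_pow {w : Option ℚ} (hw : InF w) : ∀ k : ℕ, Nneg ((e^(-(k+1:ℕ) : ℤ)) w) := by
  intro k
  induction k with
  | zero =>
    have : (e^(-(0+1:ℕ):ℤ)) w = hm w := by
      rw [show (-(0+1:ℕ):ℤ) = -1 by norm_num, zpow_neg_one]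
      rfl
    rw [this]
    exact nneg_hm_of_inF hw
  | succ k ih =>
    have : (e^(-(k+1+1:ℕ):ℤ)) w = hm ((e^(-(k+1:ℕ):ℤ)) w) := by
      have hcast : (-(k+1+1:ℕ):ℤ) = (-(k+1:ℕ):ℤ) - 1 := by push_cast; ring
      rw [hcast, hm_zpow]
    rw [this]
    exact nneg_hm_of_nneg ih

lemma lv_unique {v : Option ℚ} {m n : ℤ} (hmv : Lv m v) (hnv : Lv n v) : m = n := by
  have key : ∀ a b : ℤ, a < b → Lv a v → ¬ Lv b v := by
    intro a b hab ha hb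
    have h1 : (e^(-b)) v = (e^(-(b-a))) ((e^(-a)) v) := by
      rw [e_pow_mul_apply]
      congr 1
      ring
    have h2 : ∃ k : ℕ, b - a = (k+1:ℕ) := ⟨(b - a - 1).toNat, by omega⟩
    obtain ⟨k, hk⟩ := h2
    have h3 : Nneg ((e^(-b)) v) := by
      rw [h1, hk]
      exact nneg_pow ha k
    exact not_inF_of_nneg h3 hb
  rcases lt_trichotomy m n with h | h | h
  · exact absurd hnv (key m n h hmv)
  · exact h
  · exact absurd hmv (key n m h hnv)

/-- The level (potential) function. -/
noncomputable def level (v : Option ℚ) : ℤ := Classical.choose (exists_lv v)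

lemma level_spec (v : Option ℚ) : Lv (level v) v := Classical.choose_spec (exists_lv v)

lemma level_eq {v : Option ℚ} {n : ℤ} (h : Lv n v) : level v = n :=
  lv_unique (level_spec v) h

lemma level_geo (n : ℤ) : level (geo n) = n := by
  apply level_eq
  unfold Lv geo
  rw [e_pow_mul_apply, show -n + n = 0 by ring, zpow_zero]
  exact trivial

lemma dens_eq_one {x y : ℚ} (h : x.den * y.den < 2) : x.den = 1 ∧ y.den = 1 := by
  have hx := x.den_pos
  have hy := y.den_pos
  have h2 : 1 ≤ x.den * y.den := Nat.one_le_iff_ne_zero.mpr (Nat.mul_ne_zero hx.ne' hy.ne')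
  have h1 : x.den * y.den = 1 := le_antisymm (Nat.lt_succ_iff.mp h) h2
  exact ⟨Nat.eq_one_of_mul_eq_one_right h1, Nat.eq_one_of_mul_eq_one_left h1⟩

lemma gm_zpow (n : ℤ) (v : Option ℚ) : gm ((e^n) v) = (e^(n+1)) v := by
  rw [show n + 1 = 1 + n by ring, zpow_add, zpow_one]
  rfl

lemma int_of_den_one {y : ℚ} (h : y.den = 1) : y = (y.num : ℚ) := by
  conv_lhs => rw [← Rat.num_div_den y]
  rw [h]
  simp

lemma abs_sub_adj {x y : ℚ} (h : Farey.Adj (some x) (some y)) :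
    |x - y| * ((x.den:ℚ) * (y.den:ℚ)) = 1 := by
  obtain ⟨hne, hdet⟩ := h
  have e1 := num_eq_mul_den x
  have e2 := num_eq_mul_den y
  have key : (x - y) * ((x.den:ℚ) * (y.den:ℚ))
      = ((x.num * (y.den:ℤ) - y.num * (x.den:ℤ) : ℤ) : ℚ) := by
    push_cast
    linear_combination (-(y.den:ℚ)) * e1 + ((x.den:ℚ)) * e2
  have habs : |x - y| * |((x.den:ℚ) * (y.den:ℚ))| = 1 := by
    rw [← abs_mul, key]
    rw [← Int.cast_abs, hdet]
    norm_num
  rwa [abs_of_pos (by positivity : (0:ℚ) < (x.den:ℚ) * (y.den:ℚ))] at habs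

lemma den_one_le (x : ℚ) : (1:ℚ) ≤ (x.den:ℚ) := by exact_mod_cast x.den_pos

lemma one_le_den_mul (x y : ℚ) : (1:ℚ) ≤ (x.den:ℚ) * (y.den:ℚ) := by
  have h1 := den_one_le x
  have h2 := den_one_le y
  nlinarith

lemma abs_sub_le_one_of_adj {x y : ℚ} (h : Farey.Adj (some x) (some y)) : |x - y| ≤ 1 := by
  have key := abs_sub_adj h
  have h2 : |x - y| * 1 ≤ |x - y| * ((x.den:ℚ) * (y.den:ℚ)) :=
    mul_le_mul_of_nonneg_left (one_le_den_mul x y) (abs_nonneg _)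
  linarith

lemma den_prod_lt {x y : ℚ} (h : Farey.Adj (some x) (some y)) {c : ℕ}
    (hlt : (1:ℚ)/c < |x - y|) (hc : 0 < c) : x.den * y.den < c := by
  have key := abs_sub_adj h
  have hcQ : (0:ℚ) < (c:ℚ) := by exact_mod_cast hc
  have h2 : ((x.den * y.den : ℕ) : ℚ) < (c:ℚ) := by
    push_cast
    by_contra hcon
    push_neg at hcon
    have h3 : |x - y| * (c:ℚ) ≤ |x - y| * ((x.den:ℚ) * (y.den:ℚ)) :=
      mul_le_mul_of_nonneg_left hcon (abs_nonneg _)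
    have h4 : (1/(c:ℚ)) * c < |x - y| * c := mul_lt_mul_of_pos_right hlt hcQ
    rw [one_div_mul_cancel hcQ.ne'] at h4
    linarith
  exact_mod_cast h2

/-- Main geometric lemma: a Farey-neighbour of the fundamental domain lies in the union
of the three middle translates. -/
lemma adj_fund {u v : Option ℚ} (h : Farey.Adj u v) (hu : InF u) :
    InF (hm v) ∨ InF v ∨ InF (gm v) := by
  match u, v with
  | none, none => exact absurd h (Farey.loopless.irrefl none)
  | some x, none => exact Or.inr (Or.inl trivial)
  | none, some y =>
    have hden : y.den = 1 := h
    have hy : y = (y.num : ℚ) := int_of_den_one hden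
    set n := y.num with hn
    rcases le_or_gt n (-1) with hc | hc
    · refine Or.inr (Or.inr (L1 ?_))
      rw [hy]; exact_mod_cast hc
    rcases le_or_gt n 0 with hc0 | hc0
    · have : n = 0 := by omega
      refine Or.inr (Or.inl (Or.inl ⟨?_, ?_⟩)) <;> rw [hy, this] <;> norm_num
    rcases le_or_gt n 1 with hc1 | hc1
    · have : n = 1 := by omega
      refine Or.inl (L4 ?_ ?_) <;> rw [hy, this] <;> norm_num
    rcases le_or_gt n 2 with hc2 | hc2
    · have : n = 2 := by omega
      refine Or.inl (L5 ?_ ?_) <;> rw [hy, this] <;> norm_num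
    · refine Or.inr (Or.inl (Or.inr ?_))
      rw [hy]; exact_mod_cast hc2
  | some x, some y =>
    have hxr : (0 ≤ x ∧ x < 1) ∨ 2 < x := hu
    have hle1 : |x - y| ≤ 1 := abs_sub_le_one_of_adj h
    rcases le_or_gt y (-1) with hy1 | hy1
    · exact Or.inr (Or.inr (L1 hy1))
    rcases lt_or_ge y (-1/2) with hy2 | hy2
    · exfalso
      rcases hxr with ⟨hx0, hx1⟩ | hx2
      · -- x ∈ [0,1), y ∈ (-1,-1/2) : dens must be 1, but no integer there
        have hprod : x.den * y.den < 2 := by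
          refine den_prod_lt h ?_ (by norm_num)
          have : (1:ℚ)/2 < x - y := by linarith
          exact lt_of_lt_of_le this (le_abs_self _)
        have hyden : y.den = 1 := (dens_eq_one hprod).2
        have hyint := int_of_den_one hyden
        have h1 : (-1:ℚ) < (y.num:ℚ) := by rw [← hyint]; exact hy1
        have h2 : ((y.num:ℚ)) < -1/2 := by rw [← hyint]; exact hy2
        have h1' : -1 < y.num := by exact_mod_cast h1
        have h2' : 2*y.num < -1 := by
          have : (2*y.num : ℚ) < -1 := by push_cast; linarith
          exact_mod_cast this
        omega
      · -- x > 2 : distance > 1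
        have : (1:ℚ) < x - y := by linarith
        linarith [le_abs_self (x - y)]
    rcases lt_or_ge y 0 with hy3 | hy3
    · exact Or.inr (Or.inr (L2 (by linarith) hy3))
    rcases lt_or_ge y 1 with hy4 | hy4
    · exact Or.inr (Or.inl (Or.inl ⟨hy3, hy4⟩))
    rcases lt_or_ge y (3/2) with hy5 | hy5
    · exact Or.inl (L4 hy4 hy5)
    rcases le_or_gt y (5/3) with hy6 | hy6
    · exfalso
      rcases hxr with ⟨hx0, hx1⟩ | hx2
      · have hprod : x.den * y.den < 2 := by
          refine den_prod_lt h ?_ (by norm_num)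
          have : (1:ℚ)/2 < y - x := by linarith
          have h2 : y - x ≤ |x - y| := by rw [abs_sub_comm]; exact le_abs_self _
          linarith
        have hyden : y.den = 1 := (dens_eq_one hprod).2
        have hyint := int_of_den_one hyden
        have h1 : (3:ℚ)/2 ≤ (y.num:ℚ) := by rw [← hyint]; exact hy5
        have h2 : ((y.num:ℚ)) ≤ 5/3 := by rw [← hyint]; exact hy6
        have h1' : 3 ≤ 2*y.num := by
          have : (3:ℚ) ≤ 2*y.num := by push_cast; linarith
          exact_mod_cast this
        have h2' : 3*y.num ≤ 5 := by
          have : (3*y.num : ℚ) ≤ 5 := by push_cast; linarith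
          exact_mod_cast this
        omega
      · have hprod : x.den * y.den < 3 := by
          refine den_prod_lt h ?_ (by norm_num)
          have : (1:ℚ)/3 < x - y := by linarith
          exact lt_of_lt_of_le this (le_abs_self _)
        by_cases hyd : y.den = 1
        · have hyint := int_of_den_one hyd
          have h1 : (3:ℚ)/2 ≤ (y.num:ℚ) := by rw [← hyint]; exact hy5
          have h2 : ((y.num:ℚ)) ≤ 5/3 := by rw [← hyint]; exact hy6
          have h1' : 3 ≤ 2*y.num := by
            have : (3:ℚ) ≤ 2*y.num := by push_cast; linarith
            exact_mod_cast this
          have h2' : 3*y.num ≤ 5 := by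
            have : (3*y.num : ℚ) ≤ 5 := by push_cast; linarith
            exact_mod_cast this
          omega
        · have hyd2 : 2 ≤ y.den := by have := y.den_pos; omega
          have hxd : x.den = 1 := by nlinarith [x.den_pos]
          have hxint := int_of_den_one hxd
          have hgt2 : (2:ℚ) < (x.num:ℚ) := by rw [← hxint]; exact hx2
          have h3 : 3 ≤ x.num := by
            have : 2 < x.num := by exact_mod_cast hgt2
            omega
          have h4 : (3:ℚ) ≤ x := by rw [hxint]; exact_mod_cast h3
          have h5 : (1:ℚ) < x - y := by linarith
          linarith [le_abs_self (x - y), hle1]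
    rcases le_or_gt y 2 with hy7 | hy7
    · exact Or.inl (L5 hy6 hy7)
    · exact Or.inr (Or.inl (Or.inr hy7))

lemma level_adj {u v : Option ℚ} (h : Farey.Adj u v) : |level u - level v| ≤ 1 := by
  set m := level u with hm0
  have hu : InF ((e^(-m)) u) := level_spec u
  have hadj : Farey.Adj ((e^(-m)) u) ((e^(-m)) v) := adj_zpow (-m) h
  rcases adj_fund hadj hu with h1 | h1 | h1
  · have hlv : Lv (m+1) v := by
      unfold Lv
      rw [show -(m+1) = -m - 1 by ring, ← hm_zpow]
      exact h1
    rw [level_eq hlv]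
    simp
  · have hlv : Lv m v := h1
    rw [level_eq hlv]
    simp
  · have hlv : Lv (m-1) v := by
      unfold Lv
      rw [show -(m-1) = -m + 1 by ring, ← gm_zpow]
      exact h1
    rw [level_eq hlv]
    simp

lemma level_walk {u v : Option ℚ} (w : Farey.Walk u v) :
    |level u - level v| ≤ (w.length : ℤ) := by
  induction w with
  | nil => simp
  | @cons a b c hab p ih =>
    calc |level a - level c| ≤ |level a - level b| + |level b - level c| := abs_sub_le _ _ _
      _ ≤ 1 + (p.length : ℤ) := add_le_add (level_adj hab) ih
      _ = ((p.length + 1 : ℕ) : ℤ) := by push_cast; ring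
      _ = _ := by rw [SimpleGraph.Walk.length_cons]

lemma walk_geo (k : ℕ) (m : ℤ) : ∃ w : Farey.Walk (geo m) (geo (m + k)), w.length = k := by
  induction k with
  | zero =>
    refine ⟨SimpleGraph.Walk.nil.copy rfl (congrArg FareyAux.geo (by norm_num)), ?_⟩
    simp
  | succ k ih =>
    obtain ⟨w, hw⟩ := ih
    have hadj : Farey.Adj (geo (m + k)) (geo (m + (k+1:ℕ))) := by
      have := adj_geo (m + k)
      rwa [show m + (k:ℤ) + 1 = m + ((k+1:ℕ):ℤ) by push_cast; ring] at this
    exact ⟨w.concat hadj, by rw [SimpleGraph.Walk.length_concat, hw]⟩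

end FareyAux

/-- There is an isometric embedding of ℤ into the Farey graph. -/
theorem farey_isometric_embedding_int :
    ∃ f : ℤ → Option ℚ,
      ∀ m n : ℤ, (Farey.dist (f m) (f n) : ℤ) = |m - n| := by
  refine ⟨FareyAux.geo, ?_⟩
  have main : ∀ m n : ℤ, m ≤ n → (Farey.dist (FareyAux.geo m) (FareyAux.geo n) : ℤ) = |m - n| := by
    intro m n hmn
    obtain ⟨k, hk⟩ : ∃ k : ℕ, n = m + k := ⟨(n-m).toNat, by omega⟩
    subst hk
    obtain ⟨w, hw⟩ := FareyAux.walk_geo k m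
    have hub : Farey.dist (FareyAux.geo m) (FareyAux.geo (m+k)) ≤ k :=
      le_trans (SimpleGraph.dist_le w) (le_of_eq hw)
    have hreach : Farey.Reachable (FareyAux.geo m) (FareyAux.geo (m+k)) := ⟨w⟩
    obtain ⟨p, hp⟩ := hreach.exists_walk_length_eq_dist
    have hlb := FareyAux.level_walk p
    rw [FareyAux.level_geo, FareyAux.level_geo] at hlb
    have habs : |m - (m+(k:ℤ))| = (k:ℤ) := by
      rw [show m - (m+(k:ℤ)) = -(k:ℤ) by ring, abs_neg, abs_of_nonneg (by positivity)]
    rw [habs]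
    rw [habs, hp] at hlb
    omega
  intro m n
  rcases le_total m n with h | h
  · exact main m n h
  · rw [SimpleGraph.dist_comm, abs_sub_comm]
    exact main n m h
end

section
/- The set S of rational vertices of the Farey graph F lying in the interval [−1, 1] is convex: for any two rationals a and b with |a| ≤ 1 and |b| ≤ 1, there exists a walk in F from a to b whose length equals the graph distance in F between a and b and all of whose vertices are rationals lying in [−1, 1]. -/
lemma farey_adj_some_some (a b : ℚ) : Farey.Adj (some a) (some b) ↔
    a ≠ b ∧ |a.num * (b.den : ℤ) - b.num * (a.den : ℤ)| = 1 := Iff.rfl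

lemma rat_abs_le_one (x : ℚ) : |x| ≤ 1 ↔ |x.num| ≤ (x.den : ℤ) := by
  rw [abs_le, abs_le, Rat.le_iff, Rat.le_iff]
  norm_num [Rat.num_neg_eq_neg_num]

/-- "inverse" of a rational, defined by hand so num/den compute. -/
def rinv (x : ℚ) : ℚ :=
  if h : x.num = 0 then 0
  else Rat.mk' (Int.sign x.num * x.den) x.num.natAbs
    (Int.natAbs_ne_zero.mpr h)
    (by
      rw [Int.natAbs_mul, Int.natAbs_sign_of_ne_zero h, one_mul, Int.natAbs_natCast]
      exact x.reduced.symm)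

lemma rinv_num {x : ℚ} (h : x.num ≠ 0) : (rinv x).num = Int.sign x.num * x.den := by
  simp [rinv, h]

lemma rinv_den {x : ℚ} (h : x.num ≠ 0) : (rinv x).den = x.num.natAbs := by
  simp [rinv, h]

/-- The folding retraction. -/
def fold : Option ℚ → Option ℚ
  | none => some (0 : ℚ)
  | some x => if |x| ≤ 1 then some x else some (rinv x)

lemma fold_some_of (x : ℚ) (h : |x| ≤ 1) : fold (some x) = some x := by simp [fold, h]
lemma fold_some_of_not (x : ℚ) (h : ¬ |x| ≤ 1) : fold (some x) = some (rinv x) := by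
  simp [fold, h]

lemma big_natAbs {x : ℚ} (hx : ¬ |x| ≤ 1) : (x.den : ℤ) < (x.num.natAbs : ℤ) := by
  rw [rat_abs_le_one, not_le] at hx
  rcases lt_abs.mp hx with h | h <;> omega

lemma num_ne_zero_of_big {x : ℚ} (hx : ¬ |x| ≤ 1) : x.num ≠ 0 := by
  have := big_natAbs hx
  omega

lemma fold_mem (u : Option ℚ) : ∃ c : ℚ, fold u = some c ∧ |c| ≤ 1 := by
  match u with
  | none => exact ⟨0, rfl, by norm_num⟩
  | some x =>
    by_cases h : |x| ≤ 1
    · exact ⟨x, fold_some_of x h, h⟩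
    · refine ⟨rinv x, fold_some_of_not x h, ?_⟩
      have hx := big_natAbs h
      have hn : x.num ≠ 0 := num_ne_zero_of_big h
      rw [rat_abs_le_one, rinv_num hn, rinv_den hn]
      rcases lt_or_gt_of_ne hn with hs | hs
      · rw [Int.sign_eq_neg_one_of_neg hs, neg_one_mul, abs_neg,
          abs_of_nonneg (Int.natCast_nonneg _)]
        omega
      · rw [Int.sign_eq_one_of_pos hs, one_mul, abs_of_nonneg (Int.natCast_nonneg _)]
        omega

/-- In a "mixed" edge with `|a| ≤ 1 < |b|`, we must have `a = ±1`. -/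
lemma mixed_aux {a b : ℚ} (ha : |a.num| ≤ (a.den : ℤ)) (hb : (b.den : ℤ) < |b.num|)
    (h : |a.num * (b.den : ℤ) - b.num * (a.den : ℤ)| = 1) :
    a.den = 1 ∧ (a.num = 1 ∨ a.num = -1) := by
  have h2 := abs_sub_abs_le_abs_sub (b.num * (a.den : ℤ)) (a.num * (b.den : ℤ))
  rw [abs_sub_comm] at h2
  rw [h] at h2
  rw [abs_mul, abs_mul] at h2
  have had : (0:ℤ) < a.den := by exact_mod_cast a.pos
  have hbd : (0:ℤ) < b.den := by exact_mod_cast b.pos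
  have habs : |a.num| = a.den := by
    rcases lt_or_eq_of_le ha with h' | h'
    · nlinarith [abs_nonneg a.num, abs_nonneg b.num,
        abs_of_nonneg (le_of_lt had), abs_of_nonneg (le_of_lt hbd)]
    · exact h'
  have habs' : a.num = a.den ∨ a.num = -(a.den : ℤ) := abs_eq (le_of_lt had) |>.mp habs
  have hna : a.num.natAbs = a.den := by omega
  have hcop := a.reduced
  rw [hna] at hcop
  have hd1 : a.den = 1 := (Nat.coprime_self a.den).mp hcop
  exact ⟨hd1, by omega⟩

lemma mixed_adj {a b : ℚ} (ha : |a| ≤ 1) (hb : ¬ |b| ≤ 1)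
    (h : Farey.Adj (some a) (some b)) : Farey.Adj (some a) (some (rinv b)) := by
  have hb' := big_natAbs hb
  have hbn : b.num ≠ 0 := num_ne_zero_of_big hb
  have hb'' : (b.den : ℤ) < |b.num| := by rw [Int.abs_eq_natAbs]; exact hb'
  rw [rat_abs_le_one] at ha
  obtain ⟨hne, habs⟩ := h
  obtain ⟨hd1, hn1⟩ := mixed_aux ha hb'' habs
  have hbdpos := b.pos
  constructor
  · intro he
    have hdd : a.den = (rinv b).den := by rw [← he]
    rw [rinv_den hbn] at hdd
    omega
  · rw [rinv_num hbn, rinv_den hbn, hd1]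
    rw [hd1] at habs
    rcases hn1 with h1 | h1 <;> rw [h1] at habs ⊢ <;>
      rcases lt_or_gt_of_ne hbn with hs | hs <;>
      [rw [Int.sign_eq_neg_one_of_neg hs]; rw [Int.sign_eq_one_of_pos hs];
       rw [Int.sign_eq_neg_one_of_neg hs]; rw [Int.sign_eq_one_of_pos hs]] <;>
      · rw [abs_eq (by norm_num : (0:ℤ) ≤ 1)] at habs ⊢
        omega

lemma rinv_inj {a b : ℚ} (ha : a.num ≠ 0) (hb : b.num ≠ 0) (h : rinv a = rinv b) :
    a = b := by
  have h1 : (rinv a).num = (rinv b).num := by rw [h]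
  have h2 : (rinv a).den = (rinv b).den := by rw [h]
  rw [rinv_num ha, rinv_num hb] at h1
  rw [rinv_den ha, rinv_den hb] at h2
  have had := a.pos
  have hbd := b.pos
  rcases lt_or_gt_of_ne ha with hsa | hsa <;> rcases lt_or_gt_of_ne hb with hsb | hsb
  · rw [Int.sign_eq_neg_one_of_neg hsa, Int.sign_eq_neg_one_of_neg hsb] at h1
    exact Rat.ext (by omega) (by omega)
  · rw [Int.sign_eq_neg_one_of_neg hsa, Int.sign_eq_one_of_pos hsb] at h1
    exact Rat.ext (by omega) (by omega)
  · rw [Int.sign_eq_one_of_pos hsa, Int.sign_eq_neg_one_of_neg hsb] at h1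
    exact Rat.ext (by omega) (by omega)
  · rw [Int.sign_eq_one_of_pos hsa, Int.sign_eq_one_of_pos hsb] at h1
    exact Rat.ext (by omega) (by omega)

lemma fold_adj {u v : Option ℚ} (h : Farey.Adj u v) :
    fold u = fold v ∨ Farey.Adj (fold u) (fold v) := by
  have key : ∀ a : ℚ, Farey.Adj none (some a) →
      fold none = fold (some a) ∨ Farey.Adj (fold none) (fold (some a)) := by
    intro a hden
    have hden : a.den = 1 := hden
    by_cases ha : |a| ≤ 1
    · rw [show fold none = some (0:ℚ) from rfl, fold_some_of a ha]
      have ha' := (rat_abs_le_one a).mp ha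
      by_cases h0 : a.num = 0
      · left; rw [Rat.num_eq_zero] at h0; rw [h0]
      · right
        have hn1 : a.num = 1 ∨ a.num = -1 := by
          have := abs_le.mp ha'
          omega
        rw [farey_adj_some_some]
        refine ⟨fun he => h0 (by rw [← he]; rfl), ?_⟩
        rcases hn1 with h1 | h1 <;> rw [h1, hden] <;> norm_num
    · rw [show fold none = some (0:ℚ) from rfl, fold_some_of_not a ha]
      right
      have hn : a.num ≠ 0 := num_ne_zero_of_big ha
      have hnum : (rinv a).num = Int.sign a.num := by rw [rinv_num hn, hden]; ring
      have hsv : Int.sign a.num = 1 ∨ Int.sign a.num = -1 := by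
        rcases lt_or_gt_of_ne hn with hs | hs
        · right; exact Int.sign_eq_neg_one_of_neg hs
        · left; exact Int.sign_eq_one_of_pos hs
      rw [farey_adj_some_some]
      constructor
      · intro he
        have : (0:ℚ).num = (rinv a).num := by rw [← he]
        rw [hnum] at this
        simp only [Rat.num_ofNat] at this
        omega
      · rw [hnum]
        rcases hsv with h1 | h1 <;> rw [h1] <;> norm_num
  match u, v with
  | none, none => exact h.elim
  | none, some a => exact key a h
  | some a, none => exact (key a (Farey.adj_symm h)).imp Eq.symm (fun h' => Farey.adj_symm h')
  | some a, some b =>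
    by_cases ha : |a| ≤ 1 <;> by_cases hb : |b| ≤ 1
    · right
      rw [fold_some_of a ha, fold_some_of b hb]
      exact h
    · right
      rw [fold_some_of a ha, fold_some_of_not b hb]
      exact mixed_adj ha hb h
    · right
      rw [fold_some_of_not a ha, fold_some_of b hb]
      exact (mixed_adj hb ha (Farey.adj_symm h)).symm
    · right
      rw [fold_some_of_not a ha, fold_some_of_not b hb]
      have hna : a.num ≠ 0 := num_ne_zero_of_big ha
      have hnb : b.num ≠ 0 := num_ne_zero_of_big hb
      obtain ⟨hne, habs⟩ := h
      rw [farey_adj_some_some]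
      refine ⟨fun he => hne (rinv_inj hna hnb he), ?_⟩
      rw [rinv_num hna, rinv_num hnb, rinv_den hna, rinv_den hnb]
      rcases lt_or_gt_of_ne hna with hsa | hsa <;> rcases lt_or_gt_of_ne hnb with hsb | hsb
      · rw [Int.sign_eq_neg_one_of_neg hsa, Int.sign_eq_neg_one_of_neg hsb]
        have e1 : ((b.num.natAbs : ℤ)) = -b.num := by omega
        have e2 : ((a.num.natAbs : ℤ)) = -a.num := by omega
        rw [e1, e2]
        rw [show (-1 * (a.den:ℤ)) * -b.num - -1 * (b.den:ℤ) * -a.num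
            = -(a.num * (b.den:ℤ) - b.num * (a.den:ℤ)) from by ring, abs_neg]
        exact habs
      · rw [Int.sign_eq_neg_one_of_neg hsa, Int.sign_eq_one_of_pos hsb]
        have e1 : ((b.num.natAbs : ℤ)) = b.num := by omega
        have e2 : ((a.num.natAbs : ℤ)) = -a.num := by omega
        rw [e1, e2]
        rw [show (-1 * (a.den:ℤ)) * b.num - 1 * (b.den:ℤ) * -a.num
            = (a.num * (b.den:ℤ) - b.num * (a.den:ℤ)) from by ring]
        exact habs
      · rw [Int.sign_eq_one_of_pos hsa, Int.sign_eq_neg_one_of_neg hsb]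
        have e1 : ((b.num.natAbs : ℤ)) = -b.num := by omega
        have e2 : ((a.num.natAbs : ℤ)) = a.num := by omega
        rw [e1, e2]
        rw [show (1 * (a.den:ℤ)) * -b.num - -1 * (b.den:ℤ) * a.num
            = (a.num * (b.den:ℤ) - b.num * (a.den:ℤ)) from by ring]
        exact habs
      · rw [Int.sign_eq_one_of_pos hsa, Int.sign_eq_one_of_pos hsb]
        have e1 : ((b.num.natAbs : ℤ)) = b.num := by omega
        have e2 : ((a.num.natAbs : ℤ)) = a.num := by omega
        rw [e1, e2]
        rw [show (1 * (a.den:ℤ)) * b.num - 1 * (b.den:ℤ) * a.num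
            = -(a.num * (b.den:ℤ) - b.num * (a.den:ℤ)) from by ring, abs_neg]
        exact habs

lemma fold_walk {u v : Option ℚ} (p : Farey.Walk u v) :
    ∃ q : Farey.Walk (fold u) (fold v), q.length ≤ p.length ∧
      ∀ w ∈ q.support, ∃ c : ℚ, w = some c ∧ |c| ≤ 1 := by
  induction p with
  | nil =>
    refine ⟨SimpleGraph.Walk.nil, le_refl _, ?_⟩
    intro w hw
    simp only [SimpleGraph.Walk.support_nil, List.mem_singleton] at hw
    subst hw
    exact fold_mem _
  | @cons x y z h p ih =>
    obtain ⟨q, hql, hqs⟩ := ih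
    rcases fold_adj h with he | hadj
    · refine ⟨q.copy he.symm rfl, ?_, ?_⟩
      · rw [SimpleGraph.Walk.length_copy]
        exact hql.trans (Nat.le_succ _)
      · intro w hw
        rw [SimpleGraph.Walk.support_copy] at hw
        exact hqs w hw
    · refine ⟨SimpleGraph.Walk.cons hadj q, ?_, ?_⟩
      · simpa using Nat.succ_le_succ hql
      · intro w hw
        rw [SimpleGraph.Walk.support_cons, List.mem_cons] at hw
        rcases hw with hw | hw
        · subst hw; exact fold_mem _
        · exact hqs w hw

lemma farey_reach_aux : ∀ n : ℕ, ∀ x : ℚ, x.den ≤ n → Farey.Reachable (some x) none := by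
  intro n
  induction n with
  | zero => intro x hx; exact absurd hx (by have := x.pos; omega)
  | succ n ih =>
    intro x hx
    by_cases h1 : x.den = 1
    · exact SimpleGraph.Adj.reachable (by exact h1)
    · have hd2 : 2 ≤ x.den := by have := x.pos; omega
      have hcop : IsCoprime x.num (x.den : ℤ) := by
        rw [Int.isCoprime_iff_gcd_eq_one]
        exact x.reduced
      obtain ⟨c, d, hcd⟩ := hcop
      set s : ℤ := c % (x.den : ℤ) with hs
      have hdpos : (0:ℤ) < (x.den : ℤ) := by exact_mod_cast x.pos
      have hs0 : 0 ≤ s := Int.emod_nonneg c (by omega)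
      have hslt : s < x.den := Int.emod_lt_of_pos c hdpos
      have hdvd : (x.den : ℤ) ∣ x.num * s - 1 := by
        have h1' : (x.den : ℤ) ∣ s - c :=
          ⟨-(c / (x.den : ℤ)), by rw [hs, Int.emod_def]; ring⟩
        have h2' : (x.den : ℤ) ∣ x.num * c - 1 :=
          ⟨-d, by linear_combination hcd⟩
        have h3 := dvd_add (h1'.mul_left x.num) h2'
        convert h3 using 1
        · rfl
        ring
      obtain ⟨t, ht⟩ := hdvd
      have hkey : x.num * s - t * (x.den : ℤ) = 1 := by
        rw [mul_comm t ((x.den : ℤ))]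
        omega
      have hsne : s ≠ 0 := by
        intro h0
        rw [h0, mul_zero, zero_sub] at hkey
        have hrd : t * (x.den : ℤ) = -1 := by linarith
        have hdvd1 : (x.den : ℤ) ∣ (1:ℤ) := by
          have hh : (x.den : ℤ) ∣ t * (x.den : ℤ) := dvd_mul_left _ _
          rw [hrd] at hh
          exact (dvd_neg).mp hh
        have := Int.le_of_dvd one_pos hdvd1
        omega
      have hcop2 : t.natAbs.Coprime s.toNat := by
        have hic : IsCoprime t s := ⟨-(x.den : ℤ), x.num, by linear_combination hkey⟩
        rw [Int.isCoprime_iff_gcd_eq_one] at hic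
        have hg : t.natAbs.gcd s.natAbs = 1 := hic
        have hnat : s.natAbs = s.toNat := by omega
        rwa [hnat] at hg
      set y : ℚ := Rat.mk' t s.toNat (by omega) hcop2 with hy
      have hyn : y.num = t := rfl
      have hyd : y.den = s.toNat := rfl
      have hadj : Farey.Adj (some x) (some y) := by
        rw [farey_adj_some_some]
        refine ⟨?_, ?_⟩
        · intro he
          have : x.den = y.den := by rw [he]
          rw [hyd] at this
          omega
        · rw [hyn, hyd]
          have hst : ((s.toNat : ℤ)) = s := by omega
          rw [hst, hkey]
          norm_num
      have hless : y.den ≤ n := by rw [hyd]; omega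
      exact (SimpleGraph.Adj.reachable hadj).trans (ih y hless)

lemma farey_reach (x : ℚ) : Farey.Reachable (some x) none :=
  farey_reach_aux x.den x le_rfl

/-- The set of rational vertices of the Farey graph lying in $[-1,1]$ is convex:
any two such vertices are joined by a geodesic walk all of whose vertices are
rationals in $[-1,1]$. -/
theorem farey_interval_convex (a b : ℚ) (ha : |a| ≤ 1) (hb : |b| ≤ 1) :
    ∃ p : Farey.Walk (some a) (some b),
      p.length = Farey.dist (some a) (some b) ∧
      ∀ v ∈ p.support, ∃ c : ℚ, v = some c ∧ |c| ≤ 1 := by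
  have hr : Farey.Reachable (some a) (some b) :=
    (farey_reach a).trans (farey_reach b).symm
  obtain ⟨p, hp⟩ := hr.exists_walk_length_eq_dist
  obtain ⟨q, hql, hqs⟩ := fold_walk p
  have hfa : fold (some a) = some a := fold_some_of a ha
  have hfb : fold (some b) = some b := fold_some_of b hb
  refine ⟨(q.copy hfa hfb), ?_, ?_⟩
  · rw [SimpleGraph.Walk.length_copy]
    have h1 : q.length ≤ Farey.dist (some a) (some b) := hp ▸ hql
    have h2 : Farey.dist (some a) (some b) ≤ q.length := by
      have := SimpleGraph.dist_le (q.copy hfa hfb)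
      rwa [SimpleGraph.Walk.length_copy] at this
    omega
  · intro v hv
    rw [SimpleGraph.Walk.support_copy] at hv
    exact hqs v hv
end
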